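/- Let φ : ℝ → ℝ be a nonnegative convex differentiable loss with γ-Lipschitz derivative, let Ω = {w ∈ ℝ^d : ‖w‖ ≤ R}, and for samples (x_t, y_t), t = 1,…,T, with ‖x_t‖ ≤ 1 and y_t ∈ {−1,+1}, set ℓ_t(w) = φ(y_t ⟨w, x_t⟩). Let w_1 = 0 and w_{t+1} = π_Ω(w_t − η ∇ℓ_t(w_t)) with step size 0 < η ≤ 1/(2γ). Then for any w_* ∈ Ω, Σ_{t=1}^T (ℓ_t(w_t) − ℓ_t(w_*)) ≤ R²/(2η) + 2ηγ Σ_{t=1}^T ℓ_t(w_t), and in particular (1 − 2ηγ) Σ_{t=1}^T ℓ_t(w_t) − Σ_{t=1}^T ℓ_t(w_*) ≤ R²/(2η). -/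

import Mathlib

open RealInnerProductSpace Finset

set_option maxHeartbeats 1000000

/-- Gradient inequality for convex differentiable functions on ℝ. -/
lemma convex_grad_ineq (φ φ' : ℝ → ℝ) (hconv : ConvexOn ℝ Set.univ φ)
    (hderiv : ∀ z, HasDerivAt φ (φ' z) z) (a b : ℝ) :
    φ a - φ b ≤ φ' a * (a - b) := by
  rcases lt_trichotomy a b with h | h | h
  · have hs := hconv.le_slope_of_hasDerivAt (Set.mem_univ a) (Set.mem_univ b) h (hderiv a)
    rw [slope_def_field] at hs
    have h0 : (0:ℝ) < b - a := by linarith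
    nlinarith [(le_div_iff₀ h0).mp hs]
  · simp [h]
  · have hs := hconv.slope_le_of_hasDerivAt (Set.mem_univ b) (Set.mem_univ a) h (hderiv a)
    rw [slope_def_field] at hs
    have h0 : (0:ℝ) < a - b := by linarith
    nlinarith [(div_le_iff₀ h0).mp hs]

/-- Quadratic upper bound from Lipschitz derivative (via MVT). -/
lemma quad_upper (φ φ' : ℝ → ℝ) (γ : ℝ) (hγ : 0 < γ)
    (hderiv : ∀ z, HasDerivAt φ (φ' z) z)
    (hlip : ∀ z z', |φ' z - φ' z'| ≤ γ * |z - z'|) (z u : ℝ) :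
    φ u ≤ φ z + φ' z * (u - z) + γ * (u - z) ^ 2 := by
  have hdf : Differentiable ℝ φ := fun t => (hderiv t).differentiableAt
  rcases lt_trichotomy u z with h | h | h
  · obtain ⟨c, hc, hceq⟩ := exists_hasDerivAt_eq_slope φ φ' h
      hdf.continuous.continuousOn (fun t _ => hderiv t)
    have hl := hlip c z
    rw [abs_le] at hl
    have habs : |c - z| = z - c := by
      rw [abs_of_nonpos (by linarith [hc.2])]; ring
    rw [habs] at hl
    have heq : φ z - φ u = φ' c * (z - u) :=
      (div_eq_iff (by linarith : z - u ≠ 0)).mp hceq.symm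
    have hzu : (0:ℝ) ≤ z - u := by linarith
    have h1 : -(γ*(z-c))*(z-u) ≤ (φ' c - φ' z)*(z-u) :=
      mul_le_mul_of_nonneg_right hl.1 hzu
    have h2 : γ*(z-c)*(z-u) ≤ γ*(z-u)*(z-u) :=
      mul_le_mul_of_nonneg_right
        (mul_le_mul_of_nonneg_left (by linarith [hc.1]) hγ.le) hzu
    nlinarith [h1, h2, heq]
  · simp [h]
  · obtain ⟨c, hc, hceq⟩ := exists_hasDerivAt_eq_slope φ φ' h
      hdf.continuous.continuousOn (fun t _ => hderiv t)
    have hl := hlip c z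
    rw [abs_le] at hl
    have habs : |c - z| = c - z := abs_of_nonneg (by linarith [hc.1])
    rw [habs] at hl
    have heq : φ u - φ z = φ' c * (u - z) :=
      (div_eq_iff (by linarith : u - z ≠ 0)).mp hceq.symm
    have hzu : (0:ℝ) ≤ u - z := by linarith
    have h1 : (φ' c - φ' z)*(u-z) ≤ γ*(c-z)*(u-z) :=
      mul_le_mul_of_nonneg_right hl.2 hzu
    have h2 : γ*(c-z)*(u-z) ≤ γ*(u-z)*(u-z) :=
      mul_le_mul_of_nonneg_right
        (mul_le_mul_of_nonneg_left (by linarith [hc.2]) hγ.le) hzu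
    nlinarith [h1, h2, heq]

/-- Self-bounding property: for nonnegative functions with γ-Lipschitz derivative,
`φ'(z)^2 ≤ 4γ φ(z)`. -/
lemma self_bound (φ φ' : ℝ → ℝ) (γ : ℝ) (hγ : 0 < γ) (hnonneg : ∀ z, 0 ≤ φ z)
    (hderiv : ∀ z, HasDerivAt φ (φ' z) z)
    (hlip : ∀ z z', |φ' z - φ' z'| ≤ γ * |z - z'|) (z : ℝ) :
    φ' z ^ 2 ≤ 4 * γ * φ z := by
  have h := quad_upper φ φ' γ hγ hderiv hlip z (z - φ' z / (2 * γ))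
  have h0 := hnonneg (z - φ' z / (2 * γ))
  have hγ' : γ ≠ 0 := ne_of_gt hγ
  have e1 : φ' z * (z - φ' z / (2 * γ) - z) = - (φ' z ^ 2 / (2 * γ)) := by
    field_simp; ring
  have e2 : γ * (z - φ' z / (2 * γ) - z) ^ 2 = φ' z ^ 2 / (4 * γ) := by
    field_simp; ring
  rw [e1, e2] at h
  have e3 : φ' z ^ 2 / (2 * γ) - φ' z ^ 2 / (4 * γ) = φ' z ^ 2 / (4 * γ) := by
    field_simp; ring
  have h4 : (0:ℝ) < 4 * γ := by linarith
  have : φ' z ^ 2 / (4 * γ) ≤ φ z := by linarith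
  calc φ' z ^ 2 = (φ' z ^ 2 / (4 * γ)) * (4 * γ) := by field_simp
    _ ≤ φ z * (4 * γ) := mul_le_mul_of_nonneg_right this h4.le
    _ = 4 * γ * φ z := by ring


lemma grad_formula {d : ℕ} (φ φ' : ℝ → ℝ) (hderiv : ∀ z, HasDerivAt φ (φ' z) z)
    (c : ℝ) (a v : EuclideanSpace ℝ (Fin d)) :
    HasGradientAt (fun w => φ (c * ⟪w, a⟫)) ((φ' (c * ⟪v, a⟫) * c) • a) v := by
  have hfun : (fun w : EuclideanSpace ℝ (Fin d) => φ (c * ⟪w, a⟫))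
      = fun w => φ (c * ⟪a, w⟫) := by
    funext u; rw [real_inner_comm]
  have hz : c * ⟪v, a⟫ = c * ⟪a, v⟫ := by rw [real_inner_comm]
  have h2 : HasFDerivAt (fun u : EuclideanSpace ℝ (Fin d) => c * ⟪a, u⟫)
      (c • innerSL ℝ a) v := ((innerSL ℝ a).hasFDerivAt).const_mul c
  have h3 := (hderiv (c * ⟪a, v⟫)).comp_hasFDerivAt v h2
  rw [hfun, hz, hasGradientAt_iff_hasFDerivAt]
  have hclm : (InnerProductSpace.toDual ℝ (EuclideanSpace ℝ (Fin d)))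
      ((φ' (c * ⟪a, v⟫) * c) • a) = φ' (c * ⟪a, v⟫) • (c • innerSL ℝ a) := by
    ext u
    simp [real_inner_smul_left, real_inner_comm a u]
    ring
  rw [hclm]
  exact h3


/-- regret bound for projected SGD on smooth nonnegative convex losses
`ℓ_t(w) = φ(y_t ⟨w, x_t⟩)` over the ball `Ω = {w : ‖w‖ ≤ R}`, with `w_1 = 0` and
step size `0 < η ≤ 1/(2γ)`. -/
theorem sgd_regret_bound {d : ℕ} (φ φ' : ℝ → ℝ) (γ R : ℝ) (hγ : 0 < γ) (hR : 0 < R)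
    (hnonneg : ∀ z, 0 ≤ φ z) (hconv : ConvexOn ℝ Set.univ φ)
    (hderiv : ∀ z, HasDerivAt φ (φ' z) z)
    (hlip : ∀ z z', |φ' z - φ' z'| ≤ γ * |z - z'|)
    (T : ℕ) (x : ℕ → EuclideanSpace ℝ (Fin d)) (y : ℕ → ℝ)
    (hx : ∀ t, ‖x t‖ ≤ 1) (hy : ∀ t, y t = 1 ∨ y t = -1)
    (ℓ : ℕ → EuclideanSpace ℝ (Fin d) → ℝ)
    (hℓ : ∀ t w, ℓ t w = φ (y t * ⟪w, x t⟫))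
    (η : ℝ) (hη0 : 0 < η) (hη : η ≤ 1 / (2 * γ))
    (w : ℕ → EuclideanSpace ℝ (Fin d)) (hw1 : w 1 = 0)
    (hmem : ∀ t, ‖w (t + 1)‖ ≤ R)
    (hproj : ∀ t, ∀ u : EuclideanSpace ℝ (Fin d), ‖u‖ ≤ R →
      ‖w t - η • gradient (ℓ t) (w t) - w (t + 1)‖ ≤
        ‖w t - η • gradient (ℓ t) (w t) - u‖)
    (wstar : EuclideanSpace ℝ (Fin d)) (hws : ‖wstar‖ ≤ R) :
    (∑ t ∈ Icc 1 T, (ℓ t (w t) - ℓ t wstar) ≤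
        R ^ 2 / (2 * η) + 2 * η * γ * ∑ t ∈ Icc 1 T, ℓ t (w t)) ∧
    (1 - 2 * η * γ) * (∑ t ∈ Icc 1 T, ℓ t (w t)) - ∑ t ∈ Icc 1 T, ℓ t wstar ≤
        R ^ 2 / (2 * η) := by
  have hgrad : ∀ t, gradient (ℓ t) (w t) = (φ' (y t * ⟪w t, x t⟫) * y t) • x t := by
    intro t
    have hfn : (ℓ t) = fun u => φ (y t * ⟪u, x t⟫) := funext (hℓ t)
    rw [hfn]
    exact (grad_formula φ φ' hderiv (y t) (x t) (w t)).gradient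
  set a : ℕ → ℝ := fun t => ‖w t - wstar‖ ^ 2 with ha
  -- per-step inequality
  have step : ∀ t, 2 * η * (ℓ t (w t) - ℓ t wstar) ≤
      (a t - a (t + 1)) + 4 * η ^ 2 * γ * ℓ t (w t) := by
    intro t
    set G : EuclideanSpace ℝ (Fin d) := gradient (ℓ t) (w t) with hG
    set v : EuclideanSpace ℝ (Fin d) := w t - η • G with hv
    -- (i) projection step
    have hpK : w (t + 1) ∈ Metric.closedBall (0 : EuclideanSpace ℝ (Fin d)) R := by
      rw [Metric.mem_closedBall, dist_zero_right]; exact hmem t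
    have hwsK : wstar ∈ Metric.closedBall (0 : EuclideanSpace ℝ (Fin d)) R := by
      rw [Metric.mem_closedBall, dist_zero_right]; exact hws
    have hobt : ∀ u ∈ Metric.closedBall (0 : EuclideanSpace ℝ (Fin d)) R,
        ⟪v - w (t + 1), u - w (t + 1)⟫ ≤ 0 := by
      apply (norm_eq_iInf_iff_real_inner_le_zero (convex_closedBall _ _) hpK).mp
      haveI : Nonempty ↥(Metric.closedBall (0 : EuclideanSpace ℝ (Fin d)) R) :=
        ⟨⟨w (t + 1), hpK⟩⟩
      have hbdd : BddBelow (Set.range fun u : ↥(Metric.closedBall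
          (0 : EuclideanSpace ℝ (Fin d)) R) => ‖v - (u : EuclideanSpace ℝ (Fin d))‖) := by
        refine ⟨0, ?_⟩
        rintro s ⟨u, rfl⟩
        exact norm_nonneg _
      refine le_antisymm (le_ciInf ?_) (ciInf_le hbdd ⟨w (t + 1), hpK⟩)
      rintro ⟨u, hu⟩
      exact hproj t u (by rwa [Metric.mem_closedBall, dist_zero_right] at hu)
    have hobtw := hobt wstar hwsK
    have hproj2 : a (t + 1) ≤ ‖v - wstar‖ ^ 2 := by
      have hsplit : v - wstar = (v - w (t + 1)) + (w (t + 1) - wstar) := by abel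
      have hexp2 : ‖v - wstar‖ ^ 2 = ‖v - w (t + 1)‖ ^ 2
          + 2 * ⟪v - w (t + 1), w (t + 1) - wstar⟫ + ‖w (t + 1) - wstar‖ ^ 2 := by
        rw [hsplit, norm_add_sq_real]
      have hneg : ⟪v - w (t + 1), w (t + 1) - wstar⟫
          = -⟪v - w (t + 1), wstar - w (t + 1)⟫ := by
        rw [← inner_neg_right]; congr 1; abel
      have h1 : (0:ℝ) ≤ ‖v - w (t + 1)‖ ^ 2 := sq_nonneg _
      simp only [ha]
      nlinarith [hobtw]
    -- (ii) expansion
    have hexp : ‖v - wstar‖ ^ 2 = a t - 2 * η * ⟪w t - wstar, G⟫ + η ^ 2 * ‖G‖ ^ 2 := by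
      have hsplit : v - wstar = (w t - wstar) - η • G := by rw [hv]; abel
      rw [hsplit, norm_sub_sq_real, real_inner_smul_right, norm_smul,
        Real.norm_eq_abs, abs_of_pos hη0, mul_pow]
      simp only [ha]
      ring
    -- (iii) convexity
    have hzs : ℓ t (w t) - ℓ t wstar ≤ ⟪w t - wstar, G⟫ := by
      rw [hG, hgrad t, real_inner_smul_right, inner_sub_left, hℓ t (w t), hℓ t wstar]
      have hci := convex_grad_ineq φ φ' hconv hderiv (y t * ⟪w t, x t⟫) (y t * ⟪wstar, x t⟫)
      nlinarith [hci]
    -- (iv) gradient norm bound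
    have hnormG : ‖G‖ ^ 2 ≤ 4 * γ * ℓ t (w t) := by
      have hy' : |y t| = 1 := by rcases hy t with h | h <;> simp [h]
      rw [hG, hgrad t, norm_smul, Real.norm_eq_abs, abs_mul, hy', mul_one, mul_pow, sq_abs,
        hℓ t (w t)]
      have hx2 : ‖x t‖ ^ 2 ≤ 1 := by nlinarith [hx t, norm_nonneg (x t)]
      have hsb := self_bound φ φ' γ hγ hnonneg hderiv hlip (y t * ⟪w t, x t⟫)
      nlinarith [sq_nonneg (φ' (y t * ⟪w t, x t⟫)), hnonneg (y t * ⟪w t, x t⟫)]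
    -- combine
    have hm1 : 2 * η * (ℓ t (w t) - ℓ t wstar) ≤ 2 * η * ⟪w t - wstar, G⟫ :=
      mul_le_mul_of_nonneg_left hzs (by linarith)
    have hm2 : η ^ 2 * ‖G‖ ^ 2 ≤ η ^ 2 * (4 * γ * ℓ t (w t)) :=
      mul_le_mul_of_nonneg_left hnormG (sq_nonneg η)
    have := hproj2
    rw [hexp] at this
    nlinarith [hm1, hm2, this]
  -- sum up
  have hsum : ∑ t ∈ Icc 1 T, (2 * η * (ℓ t (w t) - ℓ t wstar)) ≤
      ∑ t ∈ Icc 1 T, ((a t - a (t + 1)) + 4 * η ^ 2 * γ * ℓ t (w t)) :=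
    Finset.sum_le_sum fun t _ => step t
  have htel : ∑ t ∈ Icc 1 T, (a t - a (t + 1)) = a 1 - a (1 + T) := by
    rw [← Finset.Ico_add_one_right_eq_Icc, Finset.sum_Ico_eq_sum_range]
    exact Finset.sum_range_sub' (fun i => a (1 + i)) T
  have ha1 : a 1 ≤ R ^ 2 := by
    have : a 1 = ‖wstar‖ ^ 2 := by simp [ha, hw1]
    rw [this]
    nlinarith [hws, norm_nonneg wstar]
  have haT : 0 ≤ a (1 + T) := sq_nonneg _
  have hSnn : 0 ≤ ∑ t ∈ Icc 1 T, ℓ t (w t) :=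
    Finset.sum_nonneg fun t _ => by rw [hℓ]; exact hnonneg _
  rw [Finset.sum_add_distrib, htel, ← Finset.mul_sum, ← Finset.mul_sum] at hsum
  have h2η : (0:ℝ) < 2 * η := by linarith
  have key : 2 * η * (R ^ 2 / (2 * η) + 2 * η * γ * ∑ t ∈ Icc 1 T, ℓ t (w t))
      = R ^ 2 + 4 * η ^ 2 * γ * ∑ t ∈ Icc 1 T, ℓ t (w t) := by
    field_simp; ring
  have first : ∑ t ∈ Icc 1 T, (ℓ t (w t) - ℓ t wstar) ≤
      R ^ 2 / (2 * η) + 2 * η * γ * ∑ t ∈ Icc 1 T, ℓ t (w t) := by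
    refine le_of_mul_le_mul_left ?_ h2η
    rw [key]
    linarith
  refine ⟨first, ?_⟩
  have hsplit : ∑ t ∈ Icc 1 T, (ℓ t (w t) - ℓ t wstar)
      = ∑ t ∈ Icc 1 T, ℓ t (w t) - ∑ t ∈ Icc 1 T, ℓ t wstar :=
    Finset.sum_sub_distrib _ _
  have hprod : 0 ≤ 2 * η * γ * ∑ t ∈ Icc 1 T, ℓ t (w t) :=
    mul_nonneg (by positivity) hSnn
  linarith [first, hprod]
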